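/- Let n be a natural number and let f : ℕ → ℕ be a finitely supported function. Suppose f 0 = 0 and f 1 = 0, suppose Σ_{m ≥ 1} f m = 2n + 2, suppose Σ_{m ≥ 1} m·f m = 6n, and suppose 2·(f 2) ≤ Σ_{m ≥ 4} ⌊2m/3⌋·f m. Then 2·(f 2) + f 3 + 4 ≤ 2n. (This is the second counting step in the proof of the paper's Theorem 4: since each bigon is adjacent to two distinct m-gons with m > 3 and each m-gon is adjacent to at most ⌊2m/3⌋ ≤ m − 2 bigons, one obtains 2f₂ ≤ Σ_{m ≥ 4} (m − 2)·f m = 2n − 4 − f₃.) -/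
import Mathlib


/-- Second counting step in the proof of Theorem 4: for a finitely supported
face-count vector `f` with `f 0 = 0`, `f 1 = 0`, `Σ_{m ≥ 1} f m = 2n + 2`,
`Σ_{m ≥ 1} m·f m = 6n`, and the bigon-adjacency bound
`2·f 2 ≤ Σ_{m ≥ 4} ⌊2m/3⌋·f m`, we get `2·f 2 + f 3 + 4 ≤ 2n`. -/
theorem stmt3 (n : ℕ) (f : ℕ →₀ ℕ)
    (h0 : f 0 = 0) (h1 : f 1 = 0)
    (hF : f.sum (fun m v => if 1 ≤ m then v else 0) = 2 * n + 2)
    (hE : f.sum (fun m v => if 1 ≤ m then m * v else 0) = 6 * n)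
    (hb : 2 * f 2 ≤ f.sum (fun m v => if 4 ≤ m then (2 * m / 3) * v else 0)) :
    2 * f 2 + f 3 + 4 ≤ 2 * n := by
  classical
  have hmem : ∀ m ∈ f.support, 2 ≤ m := by
    intro m hm
    by_contra h
    interval_cases m <;> simp_all [Finsupp.mem_support_iff]
  rw [Finsupp.sum] at hF hE hb
  have hF' : ∑ m ∈ f.support, f m = 2 * n + 2 := by
    rw [← hF]
    refine Finset.sum_congr rfl fun m hm => ?_
    have := hmem m hm
    simp [show 1 ≤ m by omega]
  have hE' : ∑ m ∈ f.support, m * f m = 6 * n := by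
    rw [← hE]
    refine Finset.sum_congr rfl fun m hm => ?_
    have := hmem m hm
    simp [show 1 ≤ m by omega]
  set S' := ∑ m ∈ f.support, (if 4 ≤ m then (m - 2) * f m else 0) with hS'
  have hb' : 2 * f 2 ≤ S' := by
    refine hb.trans (Finset.sum_le_sum fun m hm => ?_)
    split
    · next h4 => exact Nat.mul_le_mul_right _ (by omega)
    · exact le_rfl
  have h3 : ∑ m ∈ f.support, (if m = 3 then f m else 0) = f 3 := by
    rw [Finset.sum_ite_eq' f.support 3 f]
    split
    · rfl
    · next h => simp [Finsupp.notMem_support_iff.mp h]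
  have key : ∑ m ∈ f.support, m * f m
      = S' + 2 * (∑ m ∈ f.support, f m) + ∑ m ∈ f.support, (if m = 3 then f m else 0) := by
    rw [hS', Finset.mul_sum, ← Finset.sum_add_distrib, ← Finset.sum_add_distrib]
    refine Finset.sum_congr rfl fun m hm => ?_
    have h2 := hmem m hm
    split_ifs with h4 hm3 hm3
    · omega
    · have hh : m - 2 + 2 = m := by omega
      nlinarith [Nat.sub_add_cancel (show 2 ≤ m by omega)]
    · subst hm3; ring
    · have : m = 2 := by omega
      subst this; ring
  omega
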